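/- Let p ∈ ℕ with p ≥ 1, ω > 0, θ ∈ 𝒮(p,ω), and λ > 0. Then for all real numbers t₀ < t, the (finite) sum over the indices k ∈ ℤ with t₀ < θ_k < t satisfies ∑_{k : t₀ < θ_k < t} e^{−λ(t−θ_k)} ≤ (p/(1 − e^{−λω})) (1 − e^{−λ(t−t₀+ω)}). -/
import Mathlib


open Filter Topology

noncomputable section

/-- `𝒮(p,ω)`: strictly increasing sequences `θ : ℤ → ℝ` with `|θ k| → ∞` as `|k| → ∞`
and `θ (k+p) = θ k + ω` for all `k`. -/
def SSeq (p : ℕ) (ω : ℝ) (θ : ℤ → ℝ) : Prop :=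
  StrictMono θ ∧ Tendsto (fun k : ℤ => |θ k|) (cocompact ℤ) atTop ∧
    ∀ k : ℤ, θ (k + (p : ℤ)) = θ k + ω

/-- for `θ ∈ 𝒮(p,ω)`, `lam > 0` and `t₀ < t`, the set of indices `k` with
`θ k ∈ (t₀, t)` is finite and the (finite) sum of `e^{-lam (t - θ k)}` over it is at most
`(p / (1 - e^{-lam ω})) (1 - e^{-lam (t - t₀ + ω)})`. -/
theorem statement11 (p : ℕ) (hp : 1 ≤ p) (ω : ℝ) (hω : 0 < ω) (θ : ℤ → ℝ)
    (hθ : SSeq p ω θ) (lam : ℝ) (hlam : 0 < lam) (t₀ t : ℝ) (h : t₀ < t) :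
    {k : ℤ | θ k ∈ Set.Ioo t₀ t}.Finite ∧
    ∑' k : {k : ℤ // θ k ∈ Set.Ioo t₀ t}, Real.exp (-lam * (t - θ k.1)) ≤
      (p : ℝ) / (1 - Real.exp (-lam * ω)) * (1 - Real.exp (-lam * (t - t₀ + ω))) := by
  obtain ⟨hmono, htend, hper⟩ := hθ
  -- Finiteness
  have hcof : Tendsto (fun k : ℤ => |θ k|) cofinite atTop := by
    rwa [← cocompact_eq_cofinite]
  have hev : ∀ᶠ k in cofinite, max |t₀| |t| + 1 ≤ |θ k| :=
    hcof.eventually_ge_atTop _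
  rw [Filter.eventually_cofinite] at hev
  have hfin : {k : ℤ | θ k ∈ Set.Ioo t₀ t}.Finite := by
    apply hev.subset
    intro k hk
    simp only [Set.mem_setOf_eq, not_le]
    have h1 : θ k < t := hk.2
    have h2 : t₀ < θ k := hk.1
    have hmax : |θ k| ≤ max |t₀| |t| := by
      rw [abs_le]
      constructor
      · nlinarith [neg_abs_le t₀, le_max_left |t₀| |t|]
      · nlinarith [le_abs_self t, le_max_right |t₀| |t|]
    linarith
  refine ⟨hfin, ?_⟩
  set S : Set ℤ := {k : ℤ | θ k ∈ Set.Ioo t₀ t} with hS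
  set F : Finset ℤ := hfin.toFinset with hF
  -- Replace the tsum by a finite sum
  have hsum : ∑' k : {k : ℤ // θ k ∈ Set.Ioo t₀ t}, Real.exp (-lam * (t - θ k.1)) =
      ∑ k ∈ F, Real.exp (-lam * (t - θ k)) := by
    have h1 := (Equiv.setCongr hfin.coe_toFinset).tsum_eq
      (fun k : S => Real.exp (-lam * (t - θ k.1)))
    exact h1.symm.trans
      (Finset.tsum_subtype hfin.toFinset (fun k => Real.exp (-lam * (t - θ k))))
  rw [hsum]
  set r : ℝ := Real.exp (-lam * ω) with hrdef
  have hr0 : 0 < r := Real.exp_pos _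
  have hr1 : r < 1 := by
    rw [hrdef, Real.exp_lt_one_iff]
    nlinarith
  have h1r : 0 < 1 - r := by linarith
  set nfun : ℤ → ℕ := fun k => ⌊(t - θ k) / ω⌋₊ with hnfun
  set N : ℕ := ⌈(t - t₀) / ω⌉₊ with hN
  have hmemF : ∀ k ∈ F, t₀ < θ k ∧ θ k < t := by
    intro k hk
    rw [hF, Set.Finite.mem_toFinset] at hk
    exact ⟨hk.1, hk.2⟩
  -- basic facts about nfun
  have hfloor_le : ∀ k ∈ F, (nfun k : ℝ) * ω ≤ t - θ k := by
    intro k hk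
    have h1 : (nfun k : ℝ) ≤ (t - θ k) / ω := Nat.floor_le
      (div_nonneg (by have := (hmemF k hk).2; linarith) hω.le)
    calc (nfun k : ℝ) * ω ≤ ((t - θ k) / ω) * ω := by nlinarith
      _ = t - θ k := by field_simp
  have hfloor_lt : ∀ k ∈ F, t - θ k < ((nfun k : ℝ) + 1) * ω := by
    intro k hk
    have h1 : (t - θ k) / ω < (nfun k : ℝ) + 1 := by
      exact_mod_cast Nat.lt_floor_add_one ((t - θ k) / ω)
    calc t - θ k = ((t - θ k) / ω) * ω := by field_simp
      _ < ((nfun k : ℝ) + 1) * ω := by nlinarith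
  have hmaps : ∀ k ∈ F, nfun k ∈ Finset.range N := by
    intro k hk
    rw [Finset.mem_range, hnfun, hN]
    have h2 : (t - θ k) / ω < (t - t₀) / ω := by
      have := (hmemF k hk).1
      gcongr
    have hx : 0 ≤ (t - θ k) / ω :=
      div_nonneg (by have := (hmemF k hk).2; linarith) hω.le
    exact (Nat.floor_lt hx).mpr (lt_of_lt_of_le h2 (Nat.le_ceil _))
  -- each fiber has at most p elements
  have hcard : ∀ n : ℕ, (F.filter (fun k => nfun k = n)).card ≤ p := by
    intro n
    set G := F.filter (fun k => nfun k = n) with hG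
    rcases G.eq_empty_or_nonempty with he | hne
    · simp [he]
    · set m := G.min' hne with hm
      have hmG : m ∈ G := G.min'_mem hne
      have hsub : G ⊆ Finset.Ico m (m + p) := by
        intro k hk
        rw [Finset.mem_Ico]
        refine ⟨G.min'_le k hk, ?_⟩
        by_contra hge
        push_neg at hge
        have hk1 : θ (m + p) ≤ θ k := hmono.monotone hge
        have hk2 : θ (m + p) = θ m + ω := hper m
        -- from membership in the fiber
        have hmF : m ∈ F := (Finset.mem_filter.mp hmG).1
        have hkF : k ∈ F := (Finset.mem_filter.mp hk).1
        have hmn : nfun m = n := (Finset.mem_filter.mp hmG).2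
        have hkn : nfun k = n := (Finset.mem_filter.mp hk).2
        have e1 : t - θ m < ((n : ℝ) + 1) * ω := by
          have := hfloor_lt m hmF; rwa [hmn] at this
        have e2 : (n : ℝ) * ω ≤ t - θ k := by
          have := hfloor_le k hkF; rwa [hkn] at this
        nlinarith
      calc G.card ≤ (Finset.Ico m (m + p)).card := Finset.card_le_card hsub
        _ = p := by
          rw [Int.card_Ico]
          simp
  -- pointwise bound by powers of r
  have hpt : ∀ k ∈ F, Real.exp (-lam * (t - θ k)) ≤ r ^ nfun k := by
    intro k hk
    have h1 : (nfun k : ℝ) * ω ≤ t - θ k := hfloor_le k hk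
    have : r ^ nfun k = Real.exp ((nfun k : ℝ) * (-lam * ω)) := by
      rw [Real.exp_nat_mul]
    rw [this]
    apply Real.exp_le_exp.mpr
    nlinarith
  -- assemble
  have step1 : ∑ k ∈ F, Real.exp (-lam * (t - θ k)) ≤ ∑ k ∈ F, r ^ nfun k :=
    Finset.sum_le_sum hpt
  have step2 : ∑ k ∈ F, r ^ nfun k =
      ∑ n ∈ Finset.range N, ∑ k ∈ F.filter (fun k => nfun k = n), r ^ nfun k :=
    (Finset.sum_fiberwise_of_maps_to hmaps _).symm
  have step3 : ∀ n ∈ Finset.range N,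
      ∑ k ∈ F.filter (fun k => nfun k = n), r ^ nfun k ≤ (p : ℝ) * r ^ n := by
    intro n _
    have : ∑ k ∈ F.filter (fun k => nfun k = n), r ^ nfun k =
        ∑ k ∈ F.filter (fun k => nfun k = n), r ^ n := by
      apply Finset.sum_congr rfl
      intro k hk
      rw [(Finset.mem_filter.mp hk).2]
    rw [this, Finset.sum_const, nsmul_eq_mul]
    have := hcard n
    have hrn : 0 < r ^ n := pow_pos hr0 n
    have : ((F.filter (fun k => nfun k = n)).card : ℝ) ≤ (p : ℝ) := by
      exact_mod_cast hcard n
    nlinarith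
  have step4 : ∑ n ∈ Finset.range N, (p : ℝ) * r ^ n =
      (p : ℝ) * ((1 - r ^ N) / (1 - r)) := by
    rw [← Finset.mul_sum, geom_sum_eq (by linarith) N]
    congr 1
    rw [← neg_sub (r ^ N) 1, ← neg_sub r 1, neg_div_neg_eq]
  -- final comparison
  have hNω : (N : ℝ) * ω < t - t₀ + ω := by
    have h1 : (N : ℝ) < (t - t₀) / ω + 1 :=
      Nat.ceil_lt_add_one (div_nonneg (by linarith) hω.le)
    have h2 : ((t - t₀) / ω + 1) * ω = t - t₀ + ω := by field_simp
    nlinarith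
  have hrN : Real.exp (-lam * (t - t₀ + ω)) ≤ r ^ N := by
    have : r ^ N = Real.exp ((N : ℝ) * (-lam * ω)) := by rw [Real.exp_nat_mul]
    rw [this]
    apply Real.exp_le_exp.mpr
    nlinarith
  have final : (p : ℝ) * ((1 - r ^ N) / (1 - r)) ≤
      (p : ℝ) / (1 - r) * (1 - Real.exp (-lam * (t - t₀ + ω))) := by
    rw [div_mul_eq_mul_div, mul_div_assoc]
    apply mul_le_mul_of_nonneg_left ?_ (by positivity)
    gcongr
  calc ∑ k ∈ F, Real.exp (-lam * (t - θ k)) ≤ ∑ k ∈ F, r ^ nfun k := step1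
    _ = ∑ n ∈ Finset.range N, ∑ k ∈ F.filter (fun k => nfun k = n), r ^ nfun k := step2
    _ ≤ ∑ n ∈ Finset.range N, (p : ℝ) * r ^ n := Finset.sum_le_sum step3
    _ = (p : ℝ) * ((1 - r ^ N) / (1 - r)) := step4
    _ ≤ (p : ℝ) / (1 - r) * (1 - Real.exp (-lam * (t - t₀ + ω))) := final
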